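/- For every integrable φ : S → ℝ, the L¹-norm ‖T(t)φ − φ‖_{L¹(S)} tends to 0 as t → 0+ (strong continuity of the family {T(t)}). -/

import Mathlib

open MeasureTheory Real Filter

/-- The action of `T(t)` on the upper-line component: `T(t)φ(x,1)`. -/
noncomputable def T1 (p q' t : ℝ) (φ1 φm : ℝ → ℝ) : ℝ → ℝ := fun x =>
  if x < 0 ∨ 0 < x - t then φ1 (x - t) else p * φ1 (x - t) + q' * φm (t - x)

/-- The action of `T(t)` on the lower-line component: `T(t)φ(x,-1)`. -/
noncomputable def Tm (q p' t : ℝ) (φ1 φm : ℝ → ℝ) : ℝ → ℝ := fun x =>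
  if 0 < x ∨ x + t < 0 then φm (x + t) else q * φm (x + t) + p' * φ1 (-x - t)

/-- `∫ |g| = (eLpNorm g 1).toReal` for integrable `g`. -/
lemma myAbsInt (g : ℝ → ℝ) (hg : Integrable g) :
    ∫ x, |g x| = (eLpNorm g 1 volume).toReal := by
  rw [eLpNorm_one_eq_lintegral_enorm,
    ← integral_norm_eq_lintegral_enorm hg.aestronglyMeasurable]
  simp [Real.norm_eq_abs]

/-- Continuity of translation in `L¹`. -/
lemma myTranslate (f : ℝ → ℝ) (hf : Integrable f) :
    Tendsto (fun t : ℝ => ∫ x, |f (x + t) - f x|) (nhds 0) (nhds 0) := by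
  haveI : Fact ((1 : ENNReal) ≤ 1) := ⟨le_rfl⟩
  set F : Lp ℝ 1 (volume : Measure ℝ) := hf.toL1 f with hF
  have hFf : (F : ℝ → ℝ) =ᵐ[volume] f := hf.coeFn_toL1
  have hgm : ∀ t : ℝ, MeasurePreserving (fun x : ℝ => x + t) volume volume := fun t =>
    measurePreserving_add_right volume t
  have hgm' : ∀ t : ℝ,
      MeasurePreserving ((⟨fun x => x + t, by continuity⟩ : C(ℝ, ℝ)) : ℝ → ℝ) volume volume :=
    fun t => hgm t
  set G : ℝ → Lp ℝ 1 (volume : Measure ℝ) := fun t =>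
    Lp.compMeasurePreserving _ (hgm' t) F with hG
  have hgc : Continuous fun t : ℝ => (⟨fun x => x + t, by continuity⟩ : C(ℝ, ℝ)) := by
    apply ContinuousMap.continuous_of_continuous_uncurry
    exact continuous_snd.add continuous_fst
  have hcont : Continuous G :=
    Continuous.compMeasurePreservingLp continuous_const hgc hgm' (by simp)
  have h0 : Tendsto (fun t => ‖G t - G 0‖) (nhds 0) (nhds 0) := by
    have := hcont.tendsto 0
    rwa [tendsto_iff_norm_sub_tendsto_zero] at this
  have hcomp : ∀ t : ℝ, (G t : ℝ → ℝ) =ᵐ[volume] fun x => f (x + t) := by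
    intro t
    refine (Lp.coeFn_compMeasurePreserving F (hgm' t)).trans ?_
    exact (hgm t).quasiMeasurePreserving.ae_eq_comp hFf
  refine h0.congr fun t => ?_
  have hsub : ((G t - G 0 : Lp ℝ 1 (volume : Measure ℝ)) : ℝ → ℝ)
      =ᵐ[volume] fun x => f (x + t) - f x := by
    filter_upwards [Lp.coeFn_sub (G t) (G 0), hcomp t, hcomp 0] with x h₁ h₂ h₃
    simp only [h₁, Pi.sub_apply, h₂, h₃, add_zero]
  rw [Lp.norm_def, eLpNorm_congr_ae hsub]
  exact (myAbsInt (fun x => f (x + t) - f x) ((hf.comp_add_right t).sub hf)).symm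

/-- The integral of `|f|` over `Icc 0 t` tends to `0` as `t → 0⁺`. -/
lemma mySmall (f : ℝ → ℝ) (hf : Integrable f) :
    Tendsto (fun t : ℝ => ∫ x in Set.Icc 0 t, |f x|)
      (nhdsWithin 0 (Set.Ioi 0)) (nhds 0) := by
  have hc : Continuous fun t : ℝ => ∫ x in (0:ℝ)..t, |f x| :=
    intervalIntegral.continuous_primitive (fun a b => hf.abs.intervalIntegrable) 0
  have h0 : Tendsto (fun t : ℝ => ∫ x in (0:ℝ)..t, |f x|)
      (nhdsWithin 0 (Set.Ioi 0)) (nhds 0) := by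
    have := (hc.tendsto 0).mono_left (nhdsWithin_le_nhds (s := Set.Ioi (0:ℝ)))
    simpa using this
  refine h0.congr' ?_
  filter_upwards [self_mem_nhdsWithin] with t ht
  rw [intervalIntegral.integral_of_le (le_of_lt ht),
    MeasureTheory.integral_Icc_eq_integral_Ioc]

/-- The integral of `|f|` over `Icc (-t) 0` tends to `0` as `t → 0⁺`. -/
lemma mySmallNeg (f : ℝ → ℝ) (hf : Integrable f) :
    Tendsto (fun t : ℝ => ∫ x in Set.Icc (-t) 0, |f x|)
      (nhdsWithin 0 (Set.Ioi 0)) (nhds 0) := by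
  have key : ∀ t : ℝ, ∫ x in Set.Icc (-t) 0, |f x| = ∫ x in Set.Icc 0 t, |f (-x)| := by
    intro t
    have := (Measure.measurePreserving_neg (volume : Measure ℝ)).setIntegral_preimage_emb
      (MeasurableEquiv.neg ℝ).measurableEmbedding (fun x => |f x|) (Set.Icc (-t) 0)
    have hpre : (Neg.neg : ℝ → ℝ) ⁻¹' Set.Icc (-t) 0 = Set.Icc 0 t := by
      ext x
      simp only [Set.mem_preimage, Set.mem_Icc]
      constructor <;> intro h <;> constructor <;> linarith [h.1, h.2]
    rw [hpre] at this
    exact this.symm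
  simp only [key]
  exact mySmall (fun x => f (-x)) hf.comp_neg

/-- Main estimate and limit for the `T1` component. -/
lemma myT1 (p q' : ℝ) (hp0 : 0 ≤ p) (hp1 : p ≤ 1) (hq'0 : 0 ≤ q') (hq'1 : q' ≤ 1)
    (φ1 φm : ℝ → ℝ) (h1 : Integrable φ1) (hm : Integrable φm) :
    Tendsto (fun t : ℝ => ∫ x, |T1 p q' t φ1 φm x - φ1 x|)
      (nhdsWithin 0 (Set.Ioi 0)) (nhds 0) := by
  -- decomposition of T1
  have hdec : ∀ t x : ℝ, T1 p q' t φ1 φm x = φ1 (x - t) +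
      Set.indicator (Set.Icc 0 t)
        (fun x => (p - 1) * φ1 (x - t) + q' * φm (t - x)) x := by
    intro t x
    by_cases h : x < 0 ∨ 0 < x - t
    · have hx : x ∉ Set.Icc 0 t := by
        rcases h with h | h
        · exact fun hx => absurd hx.1 (not_le.2 h)
        · exact fun hx => absurd hx.2 (not_le.2 (by linarith))
      simp only [T1]
      rw [if_pos h, Set.indicator_of_notMem hx, add_zero]
    · push_neg at h
      have hx : x ∈ Set.Icc 0 t := ⟨h.1, by linarith [h.2]⟩
      simp only [T1]
      rw [if_neg (by push_neg; exact h), Set.indicator_of_mem hx]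
      ring
  -- integrability of the inner function
  have hw : ∀ t : ℝ, Integrable
      (fun x => (p - 1) * φ1 (x - t) + q' * φm (t - x)) := fun t =>
    ((h1.comp_sub_right t).const_mul _).add ((hm.comp_sub_left t).const_mul _)
  have hT1 : ∀ t : ℝ, Integrable (fun x => T1 p q' t φ1 φm x - φ1 x) := by
    intro t
    have : Integrable (fun x => (φ1 (x - t) +
        Set.indicator (Set.Icc 0 t)
          (fun x => (p - 1) * φ1 (x - t) + q' * φm (t - x)) x) - φ1 x) :=
      (((h1.comp_sub_right t).add ((hw t).indicator measurableSet_Icc)).sub h1)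
    exact this.congr (Filter.Eventually.of_forall fun x => by simp only [hdec t x])
  -- pointwise bound
  have hbound : ∀ t x : ℝ, |T1 p q' t φ1 φm x - φ1 x| ≤
      |φ1 (x - t) - φ1 x| +
        Set.indicator (Set.Icc 0 t) (fun x => |φ1 (x - t)| + |φm (t - x)|) x := by
    intro t x
    rw [hdec t x]
    have h₁ : |φ1 (x - t) +
        Set.indicator (Set.Icc 0 t)
          (fun x => (p - 1) * φ1 (x - t) + q' * φm (t - x)) x - φ1 x| ≤
        |φ1 (x - t) - φ1 x| +
          |Set.indicator (Set.Icc 0 t)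
            (fun x => (p - 1) * φ1 (x - t) + q' * φm (t - x)) x| := by
      have := abs_add_le (φ1 (x - t) - φ1 x)
        (Set.indicator (Set.Icc 0 t)
          (fun x => (p - 1) * φ1 (x - t) + q' * φm (t - x)) x)
      calc _ = |(φ1 (x - t) - φ1 x) +
          Set.indicator (Set.Icc 0 t)
            (fun x => (p - 1) * φ1 (x - t) + q' * φm (t - x)) x| := by
            rw [add_sub_right_comm]
        _ ≤ _ := this
    refine h₁.trans (add_le_add le_rfl ?_)
    by_cases hx : x ∈ Set.Icc 0 t
    · rw [Set.indicator_of_mem hx, Set.indicator_of_mem hx]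
      calc |(p - 1) * φ1 (x - t) + q' * φm (t - x)|
          ≤ |(p - 1) * φ1 (x - t)| + |q' * φm (t - x)| := abs_add_le _ _
        _ ≤ |φ1 (x - t)| + |φm (t - x)| := by
            rw [abs_mul, abs_mul]
            have h2 : |p - 1| ≤ 1 := by rw [abs_le]; constructor <;> linarith
            have h3 : |q'| ≤ 1 := by rw [abs_le]; constructor <;> linarith
            have := mul_le_of_le_one_left (abs_nonneg (φ1 (x - t))) h2
            have := mul_le_of_le_one_left (abs_nonneg (φm (t - x))) h3
            linarith
    · rw [Set.indicator_of_notMem hx, Set.indicator_of_notMem hx, abs_zero]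
  -- integral bound
  have hIneq : ∀ t : ℝ, (∫ x, |T1 p q' t φ1 φm x - φ1 x|) ≤
      (∫ x, |φ1 (x - t) - φ1 x|) +
        ((∫ x in Set.Icc (-t) 0, |φ1 x|) + ∫ x in Set.Icc 0 t, |φm x|) := by
    intro t
    have hint1 : Integrable fun x : ℝ => |φ1 (x - t) - φ1 x| :=
      ((h1.comp_sub_right t).sub h1).abs
    have hint2 : Integrable
        (Set.indicator (Set.Icc 0 t) (fun x => |φ1 (x - t)| + |φm (t - x)|)) :=
      (((h1.comp_sub_right t).abs.add (hm.comp_sub_left t).abs)).indicator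
        measurableSet_Icc
    have step1 : (∫ x, |T1 p q' t φ1 φm x - φ1 x|) ≤
        ∫ x, (|φ1 (x - t) - φ1 x| +
          Set.indicator (Set.Icc 0 t) (fun x => |φ1 (x - t)| + |φm (t - x)|) x) :=
      integral_mono (hT1 t).abs (hint1.add hint2) (hbound t)
    have step2 : (∫ x, (|φ1 (x - t) - φ1 x| +
        Set.indicator (Set.Icc 0 t) (fun x => |φ1 (x - t)| + |φm (t - x)|) x)) =
        (∫ x, |φ1 (x - t) - φ1 x|) +
          ∫ x in Set.Icc 0 t, (|φ1 (x - t)| + |φm (t - x)|) := by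
      rw [integral_add hint1 hint2, integral_indicator measurableSet_Icc]
    have step3 : (∫ x in Set.Icc 0 t, (|φ1 (x - t)| + |φm (t - x)|)) =
        (∫ x in Set.Icc 0 t, |φ1 (x - t)|) + ∫ x in Set.Icc 0 t, |φm (t - x)| :=
      integral_add ((h1.comp_sub_right t).abs.integrableOn)
        ((hm.comp_sub_left t).abs.integrableOn)
    have sub1 : (∫ x in Set.Icc 0 t, |φ1 (x - t)|) = ∫ x in Set.Icc (-t) 0, |φ1 x| := by
      have := (measurePreserving_sub_right (volume : Measure ℝ) t).setIntegral_preimage_emb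
        (MeasurableEquiv.subRight t).measurableEmbedding (fun x => |φ1 x|)
          (Set.Icc (-t) 0)
      have hpre : (· - t : ℝ → ℝ) ⁻¹' Set.Icc (-t) 0 = Set.Icc 0 t := by
        ext x; simp [sub_nonneg, sub_nonpos, le_sub_iff_add_le, sub_le_iff_le_add]
      rw [hpre] at this
      exact this
    have sub2 : (∫ x in Set.Icc 0 t, |φm (t - x)|) = ∫ x in Set.Icc 0 t, |φm x| := by
      have := (Measure.measurePreserving_sub_left (volume : Measure ℝ) t).setIntegral_preimage_emb
        (MeasurableEquiv.subLeft t).measurableEmbedding (fun x => |φm x|)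
          (Set.Icc 0 t)
      have hpre : ((t - ·) : ℝ → ℝ) ⁻¹' Set.Icc 0 t = Set.Icc 0 t := by
        ext x; simp [sub_nonneg, sub_nonpos, le_sub_iff_add_le, sub_le_iff_le_add]
      rw [hpre] at this
      exact this
    calc (∫ x, |T1 p q' t φ1 φm x - φ1 x|) ≤ _ := step1
      _ = _ := step2
      _ = (∫ x, |φ1 (x - t) - φ1 x|) +
          ((∫ x in Set.Icc (-t) 0, |φ1 x|) + ∫ x in Set.Icc 0 t, |φm x|) := by
        rw [step3, sub1, sub2]
  -- the dominating function tends to 0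
  have hD : Tendsto (fun t : ℝ => ∫ x, |φ1 (x - t) - φ1 x|)
      (nhdsWithin 0 (Set.Ioi 0)) (nhds 0) := by
    have hneg : Tendsto (fun t : ℝ => -t) (nhdsWithin 0 (Set.Ioi 0)) (nhds 0) := by
      have := (continuous_neg.tendsto (0:ℝ)).mono_left (nhdsWithin_le_nhds
        (s := Set.Ioi (0:ℝ)))
      simpa using this
    have := (myTranslate φ1 h1).comp hneg
    refine this.congr fun t => ?_
    simp [Function.comp, sub_eq_add_neg]
  have hg : Tendsto (fun t : ℝ => (∫ x, |φ1 (x - t) - φ1 x|) +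
      ((∫ x in Set.Icc (-t) 0, |φ1 x|) + ∫ x in Set.Icc 0 t, |φm x|))
      (nhdsWithin 0 (Set.Ioi 0)) (nhds 0) := by
    have := hD.add ((mySmallNeg φ1 h1).add (mySmall φm hm))
    simpa using this
  exact squeeze_zero (fun t => integral_nonneg fun x => abs_nonneg _)
    (fun t => hIneq t) hg

theorem stmt2 (p p' q q' : ℝ) (hp : 0 ≤ p) (hp' : 0 ≤ p') (hq : 0 ≤ q) (hq' : 0 ≤ q')
    (hpp : p + p' ≤ 1) (hqq : q + q' ≤ 1)
    (φ1 φm : ℝ → ℝ) (h1 : Integrable φ1) (hm : Integrable φm) :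
    Tendsto (fun t : ℝ =>
        (∫ x, |T1 p q' t φ1 φm x - φ1 x|) + ∫ x, |Tm q p' t φ1 φm x - φm x|)
      (nhdsWithin 0 (Set.Ioi 0)) (nhds 0) := by
  have hA : Tendsto (fun t : ℝ => ∫ x, |T1 p q' t φ1 φm x - φ1 x|)
      (nhdsWithin 0 (Set.Ioi 0)) (nhds 0) :=
    myT1 p q' hp (by linarith) hq' (by linarith) φ1 φm h1 hm
  -- reduce Tm to T1 by reflection
  have hrefl : ∀ t x : ℝ, Tm q p' t φ1 φm x =
      T1 q p' t (fun y => φm (-y)) (fun y => φ1 (-y)) (-x) := by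
    intro t x
    simp only [Tm, T1]
    have hcond : ((-x : ℝ) < 0 ∨ 0 < -x - t) ↔ (0 < x ∨ x + t < 0) := by
      constructor <;> rintro (h | h) <;> [left; right; left; right] <;> linarith
    by_cases h : 0 < x ∨ x + t < 0
    · rw [if_pos h, if_pos (hcond.2 h)]
      ring_nf
    · rw [if_neg h, if_neg (fun hc => h (hcond.1 hc))]
      ring_nf
  have hint : ∀ t : ℝ, (∫ x, |Tm q p' t φ1 φm x - φm x|) =
      ∫ x, |T1 q p' t (fun y => φm (-y)) (fun y => φ1 (-y)) x - φm (-x)| := by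
    intro t
    rw [← integral_neg_eq_self
      (fun x => |T1 q p' t (fun y => φm (-y)) (fun y => φ1 (-y)) x - φm (-x)|) volume]
    congr 1
    ext x
    rw [hrefl t x, neg_neg]
  have hB : Tendsto (fun t : ℝ => ∫ x, |Tm q p' t φ1 φm x - φm x|)
      (nhdsWithin 0 (Set.Ioi 0)) (nhds 0) := by
    have := myT1 q p' hq (by linarith) hp' (by linarith)
      (fun y => φm (-y)) (fun y => φ1 (-y)) hm.comp_neg h1.comp_neg
    refine this.congr fun t => ?_
    exact (hint t).symm
  simpa using hA.add hB
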